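/- Let x* ∈ ℝⁿ, let F : ℝⁿ → ℝⁿ be continuous with F(x*) = 0, and let V : ℝⁿ → ℝ be continuously differentiable with V(x*) = 0. Suppose there exist r > 0 and class-K functions α₁, α₂, α (with α locally Lipschitz) such that α₁(‖x − x*‖) ≤ V(x) ≤ α₂(‖x − x*‖) for all x with ‖x − x*‖ < r, and ⟨∇V(x), F(x)⟩ ≤ −α(V(x)) for all x with 0 < ‖x − x*‖ < r. Let c > 0 be such that the sublevel set Ω_c := {x ∈ ℝⁿ : V(x) ≤ c} is contained in the open ball of radius r about x*. Then every solution x(·) of ẋ = F(x) on [0,∞) with x(0) ∈ Ω_c satisfies x(t) ∈ Ω_c for all t ≥ 0, and moreover x(t) → x* as t → ∞ (i.e., Ω_c is forward invariant and is contained in the region of attraction of x*). -/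

import Mathlib

open scoped RealInnerProductSpace

/-- A class-K function: continuous and strictly increasing on `[0,∞)`, vanishing at `0`,
and mapping `[0,∞)` into `[0,∞)`. -/
def IsClassK (α : ℝ → ℝ) : Prop :=
  ContinuousOn α (Set.Ici 0) ∧ StrictMonoOn α (Set.Ici 0) ∧ α 0 = 0 ∧
    ∀ s : ℝ, 0 ≤ s → 0 ≤ α s

/-- Lemma 2 (CLF sublevel sets as certified regions of attraction, closed-loop form):
a compactly contained sublevel set `Ω_c = {x | V x ≤ c}` of a local CLF is forward
invariant and contained in the region of attraction of the equilibrium. -/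
theorem clf_sublevel_invariant_and_attracting {n : ℕ}
    (xs : EuclideanSpace ℝ (Fin n))
    (F : EuclideanSpace ℝ (Fin n) → EuclideanSpace ℝ (Fin n))
    (hF : Continuous F) (hFxs : F xs = 0)
    (V : EuclideanSpace ℝ (Fin n) → ℝ)
    (hV : ContDiff ℝ 1 V) (hVxs : V xs = 0)
    (r : ℝ) (hr : 0 < r)
    (α₁ α₂ α : ℝ → ℝ)
    (hα₁ : IsClassK α₁) (hα₂ : IsClassK α₂) (hα : IsClassK α)
    (hαlip : LocallyLipschitzOn (Set.Ici 0) α)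
    (hbound : ∀ x : EuclideanSpace ℝ (Fin n), ‖x - xs‖ < r →
      α₁ ‖x - xs‖ ≤ V x ∧ V x ≤ α₂ ‖x - xs‖)
    (hdecr : ∀ x : EuclideanSpace ℝ (Fin n), 0 < ‖x - xs‖ → ‖x - xs‖ < r →
      ⟪gradient V x, F x⟫ ≤ -α (V x))
    (c : ℝ) (hc : 0 < c)
    (hsub : {x : EuclideanSpace ℝ (Fin n) | V x ≤ c} ⊆ Metric.ball xs r) :
    ∀ x : ℝ → EuclideanSpace ℝ (Fin n),
      (∀ t : ℝ, 0 ≤ t → HasDerivAt x (F (x t)) t) →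
      x 0 ∈ {y : EuclideanSpace ℝ (Fin n) | V y ≤ c} →
      (∀ t : ℝ, 0 ≤ t → x t ∈ {y : EuclideanSpace ℝ (Fin n) | V y ≤ c}) ∧
        Filter.Tendsto x Filter.atTop (nhds xs) := by
  intro x hx hx0
  obtain ⟨hα₁c, hα₁m, hα₁0, hα₁nn⟩ := hα₁
  obtain ⟨hαc, hαm, hα0, hαnn⟩ := hα
  have hVd : Differentiable ℝ V := hV.differentiable one_ne_zero
  -- basic consequences of the hypotheses
  have hball : ∀ y : EuclideanSpace ℝ (Fin n), V y ≤ c → ‖y - xs‖ < r := by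
    intro y hy
    have := hsub hy
    rwa [Metric.mem_ball, dist_eq_norm] at this
  have hVnn : ∀ y : EuclideanSpace ℝ (Fin n), V y ≤ c → 0 ≤ V y := by
    intro y hy
    exact le_trans (hα₁nn _ (norm_nonneg _)) (hbound y (hball y hy)).1
  have heqxs : ∀ y : EuclideanSpace ℝ (Fin n), V y ≤ c → V y = 0 → y = xs := by
    intro y hy h0
    by_contra hne
    have hn : 0 < ‖y - xs‖ := by
      rw [norm_pos_iff, sub_ne_zero]; exact hne
    have h1 := (hbound y (hball y hy)).1
    have h2 : α₁ 0 < α₁ ‖y - xs‖ :=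
      hα₁m (Set.mem_Ici.mpr le_rfl) (Set.mem_Ici.mpr (norm_nonneg _)) hn
    rw [hα₁0] at h2
    linarith
  have hder : ∀ y : EuclideanSpace ℝ (Fin n), V y ≤ c →
      ⟪gradient V y, F y⟫ ≤ -α (V y) := by
    intro y hy
    rcases eq_or_lt_of_le (hVnn y hy) with h0 | hpos
    · have hyx : y = xs := heqxs y hy h0.symm
      simp [hyx, hFxs, hVxs, hα0]
    · have hn : 0 < ‖y - xs‖ := by
        rw [norm_pos_iff, sub_ne_zero]
        intro h
        rw [h, hVxs] at hpos
        exact lt_irrefl _ hpos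
      exact hdecr y hn (hball y hy)
  -- derivative of V along the trajectory
  have hv : ∀ t : ℝ, 0 ≤ t →
      HasDerivAt (fun s => V (x s)) (⟪gradient V (x t), F (x t)⟫) t := by
    intro t ht
    have h1 := (hVd (x t)).hasGradientAt.hasFDerivAt
    simpa [InnerProductSpace.toDual_apply_apply, Function.comp_def] using h1.comp_hasDerivAt t (hx t ht)
  have hx0' : V (x 0) ≤ c := hx0
  -- Step 1: forward invariance
  have hinv : ∀ t : ℝ, 0 ≤ t → V (x t) ≤ c := by
    by_contra hcon
    push_neg at hcon
    obtain ⟨t₁, ht₁, hvt₁⟩ := hcon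
    have hvcont : ContinuousOn (fun s => V (x s)) (Set.Icc 0 t₁) :=
      fun s hs => ((hv s hs.1).continuousAt).continuousWithinAt
    have hSclosed : IsClosed (Set.Icc 0 t₁ ∩ (fun s => V (x s)) ⁻¹' Set.Iic c) :=
      hvcont.preimage_isClosed_of_isClosed isClosed_Icc isClosed_Iic
    have hSne : (Set.Icc 0 t₁ ∩ (fun s => V (x s)) ⁻¹' Set.Iic c).Nonempty :=
      ⟨0, ⟨le_rfl, ht₁⟩, hx0'⟩
    have hSbdd : BddAbove (Set.Icc 0 t₁ ∩ (fun s => V (x s)) ⁻¹' Set.Iic c) :=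
      ⟨t₁, fun s hs => hs.1.2⟩
    set T := sSup (Set.Icc 0 t₁ ∩ (fun s => V (x s)) ⁻¹' Set.Iic c) with hT_def
    have hTS : T ∈ Set.Icc 0 t₁ ∩ (fun s => V (x s)) ⁻¹' Set.Iic c :=
      hSclosed.csSup_mem hSne hSbdd
    have hT0 : 0 ≤ T := hTS.1.1
    have hTc : V (x T) ≤ c := hTS.2
    have hTlt : T < t₁ := by
      rcases lt_or_eq_of_le hTS.1.2 with h | h
      · exact h
      · rw [h] at hTc; linarith
    have hgt : ∀ s, T < s → s ≤ t₁ → c < V (x s) := by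
      intro s hs hs1
      by_contra h
      push_neg at h
      have hmem : s ∈ Set.Icc 0 t₁ ∩ (fun s => V (x s)) ⁻¹' Set.Iic c :=
        ⟨⟨le_trans hT0 hs.le, hs1⟩, h⟩
      exact absurd (le_csSup hSbdd hmem) (not_le.mpr hs)
    have hvT : V (x T) = c := by
      refine le_antisymm hTc ?_
      have htend : Filter.Tendsto (fun s => V (x s)) (nhdsWithin T (Set.Ioi T))
          (nhds (V (x T))) :=
        ((hv T hT0).continuousAt).continuousWithinAt
      refine ge_of_tendsto htend ?_
      filter_upwards [eventually_mem_nhdsWithin,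
        Filter.eventually_of_mem (nhdsWithin_le_nhds (Iio_mem_nhds hTlt)) (fun s hs => hs)]
        with s hs hs'
      exact (hgt s hs hs'.le).le
    have hαcpos : 0 < α c := by
      rw [← hα0]
      exact hαm (Set.mem_Ici.mpr le_rfl) (Set.mem_Ici.mpr hc.le) hc
    have hdneg : ⟪gradient V (x T), F (x T)⟫ < 0 := by
      have h1 := hder (x T) hTc
      rw [hvT] at h1
      linarith
    have hslope := hasDerivAt_iff_tendsto_slope.mp (hv T hT0)
    have hev : ∀ᶠ s in nhdsWithin T {T}ᶜ, slope (fun s => V (x s)) T s < 0 :=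
      hslope.eventually_lt_const hdneg
    have hev2 : ∀ᶠ s in nhdsWithin T (Set.Ioi T), slope (fun s => V (x s)) T s < 0 :=
      hev.filter_mono (nhdsWithin_mono T
        (fun s hs => Set.mem_compl_singleton_iff.mpr (ne_of_gt hs)))
    have hev3 : ∀ᶠ s in nhdsWithin T (Set.Ioi T), s < t₁ :=
      Filter.eventually_of_mem (nhdsWithin_le_nhds (Iio_mem_nhds hTlt)) (fun s hs => hs)
    obtain ⟨s, hs1, hs2, hs3⟩ := (hev2.and (hev3.and eventually_mem_nhdsWithin)).exists
    have hsT : T < s := hs3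
    rw [slope_def_field] at hs1
    have hposs : 0 < s - T := sub_pos.mpr hsT
    have hlt : V (x s) - V (x T) < 0 := by
      by_contra h
      push_neg at h
      exact absurd hs1 (not_lt.mpr (div_nonneg h hposs.le))
    have hgs := hgt s hsT hs2.le
    rw [hvT] at hlt
    linarith
  -- consequences of invariance
  have hball' : ∀ t : ℝ, 0 ≤ t → ‖x t - xs‖ < r := fun t ht => hball _ (hinv t ht)
  have hdle : ∀ t : ℝ, 0 ≤ t → ⟪gradient V (x t), F (x t)⟫ ≤ -α (V (x t)) :=
    fun t ht => hder _ (hinv t ht)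
  have hvnn : ∀ t : ℝ, 0 ≤ t → 0 ≤ V (x t) := fun t ht => hVnn _ (hinv t ht)
  -- V ∘ x is antitone on [0,∞)
  have hmono : AntitoneOn (fun s => V (x s)) (Set.Ici 0) := by
    apply antitoneOn_of_deriv_nonpos (convex_Ici 0)
    · exact fun s hs => ((hv s hs).continuousAt).continuousWithinAt
    · intro s hs
      rw [interior_Ici] at hs
      exact ((hv s (le_of_lt hs)).differentiableAt).differentiableWithinAt
    · intro s hs
      rw [interior_Ici] at hs
      rw [(hv s hs.le).deriv]
      exact le_trans (hdle s hs.le) (neg_nonpos.mpr (hαnn _ (hvnn s hs.le)))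
  have hwanti : Antitone (fun t => V (x (max t 0))) := fun a b hab =>
    hmono (Set.mem_Ici.mpr (le_max_right a 0)) (Set.mem_Ici.mpr (le_max_right b 0))
      (max_le_max hab le_rfl)
  have hwnn : ∀ t : ℝ, 0 ≤ V (x (max t 0)) := fun t => hvnn _ (le_max_right t 0)
  have hwbdd : BddBelow (Set.range (fun t => V (x (max t 0)))) := by
    refine ⟨0, ?_⟩
    rintro _ ⟨t, rfl⟩
    exact hwnn t
  have hwtend : Filter.Tendsto (fun t => V (x (max t 0))) Filter.atTop
      (nhds (⨅ t : ℝ, V (x (max t 0)))) := tendsto_atTop_ciInf hwanti hwbdd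
  have hL0 : 0 ≤ ⨅ t : ℝ, V (x (max t 0)) := le_ciInf hwnn
  have hLle : ∀ t : ℝ, 0 ≤ t → (⨅ t : ℝ, V (x (max t 0))) ≤ V (x t) := by
    intro t ht
    have h1 : (⨅ t : ℝ, V (x (max t 0))) ≤ V (x (max t 0)) := ciInf_le hwbdd t
    rwa [max_eq_left ht] at h1
  have hLeq : (⨅ t : ℝ, V (x (max t 0))) = 0 := by
    by_contra hne
    have hL : 0 < ⨅ t : ℝ, V (x (max t 0)) := lt_of_le_of_ne hL0 (Ne.symm hne)
    set L := ⨅ t : ℝ, V (x (max t 0)) with hLdef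
    have hαL : 0 < α L := by
      rw [← hα0]
      exact hαm (Set.mem_Ici.mpr le_rfl) (Set.mem_Ici.mpr hL.le) hL
    have hg : ∀ t : ℝ, 0 ≤ t → HasDerivAt (fun s => V (x s) + α L * s)
        (⟪gradient V (x t), F (x t)⟫ + α L) t := by
      intro t ht
      have hid : HasDerivAt (fun s : ℝ => α L * s) (α L) t := by
        simpa using (hasDerivAt_id t).const_mul (α L)
      exact (hv t ht).add hid
    have hganti : AntitoneOn (fun s => V (x s) + α L * s) (Set.Ici 0) := by
      apply antitoneOn_of_deriv_nonpos (convex_Ici 0)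
      · exact fun s hs => ((hg s hs).continuousAt).continuousWithinAt
      · intro s hs
        rw [interior_Ici] at hs
        exact ((hg s hs.le).differentiableAt).differentiableWithinAt
      · intro s hs
        rw [interior_Ici] at hs
        rw [(hg s hs.le).deriv]
        have h1 := hdle s hs.le
        have h2 : α L ≤ α (V (x s)) :=
          hαm.monotoneOn (Set.mem_Ici.mpr hL.le) (Set.mem_Ici.mpr (hvnn s hs.le))
            (hLle s hs.le)
        linarith
    have ht₂ : (0:ℝ) ≤ (V (x 0) + 1) / α L :=
      div_nonneg (by linarith [hvnn 0 le_rfl]) hαL.le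
    have h5 : V (x ((V (x 0) + 1) / α L)) + α L * ((V (x 0) + 1) / α L) ≤
        V (x 0) + α L * 0 :=
      hganti Set.self_mem_Ici (Set.mem_Ici.mpr ht₂) ht₂
    have hmul : α L * ((V (x 0) + 1) / α L) = V (x 0) + 1 := by
      field_simp
    have h6 := hvnn _ ht₂
    rw [hmul] at h5
    linarith
  have hvtend : Filter.Tendsto (fun t => V (x t)) Filter.atTop (nhds 0) := by
    rw [hLeq] at hwtend
    apply hwtend.congr'
    filter_upwards [Filter.eventually_ge_atTop (0:ℝ)] with t ht
    rw [max_eq_left ht]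
  -- conclusion
  refine ⟨fun t ht => hinv t ht, ?_⟩
  rw [Metric.tendsto_nhds]
  intro ε hε
  have hε' : 0 < min ε r := lt_min hε hr
  have hαε : 0 < α₁ (min ε r) := by
    rw [← hα₁0]
    exact hα₁m (Set.mem_Ici.mpr le_rfl) (Set.mem_Ici.mpr hε'.le) hε'
  filter_upwards [Filter.eventually_ge_atTop (0:ℝ), hvtend.eventually_lt_const hαε]
    with t ht hvt
  rw [dist_eq_norm]
  by_contra hcon
  push_neg at hcon
  have h1 : min ε r ≤ ‖x t - xs‖ := le_trans (min_le_left _ _) hcon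
  have h2 : α₁ (min ε r) ≤ α₁ ‖x t - xs‖ :=
    hα₁m.monotoneOn (Set.mem_Ici.mpr hε'.le) (Set.mem_Ici.mpr (norm_nonneg _)) h1
  have h3 := (hbound (x t) (hball' t ht)).1
  linarith
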